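/- (Corollary: semi-invariants of filtered affine Ã_r-Dynkin quivers without framing.) Let n ≥ 1 and r ≥ 1, and let Q be an arbitrary orientation of the affine Ã_r-Dynkin graph: vertices 1,…,r+1 arranged in a cycle, with arrows a_1,…,a_{r+1}, where for 1 ≤ α ≤ r the endpoint set of a_α is {α, α+1} and the endpoint set of a_{r+1} is {r+1, 1}. Let U_n^{r+1} act on 𝔟_n^{⊕(r+1)} by (u_1,…,u_{r+1})·(A_1,…,A_{r+1}) = (u_{h(a_α)} A_α u_{t(a_α)}^{−1})_{α}. Then a polynomial function f on 𝔟_n^{⊕(r+1)} is invariant under this action if and only if there is a polynomial g in (r+1)·n variables such that f(A_1,…,A_{r+1}) = g(((A_α)_{ii})_{1≤α≤r+1, 1≤i≤n}) for all tuples of upper triangular matrices; that is, ℂ[𝔟^{⊕(r+1)}]^{𝕌_β} ≅ ℂ[𝔱^{⊕(r+1)}]. -/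

import Mathlib

def IsUT {n : ℕ} (M : Matrix (Fin n) (Fin n) ℂ) : Prop :=
  ∀ i j : Fin n, j < i → M i j = 0

def IsUnipUT {n : ℕ} (M : Matrix (Fin n) (Fin n) ℂ) : Prop :=
  IsUT M ∧ ∀ i : Fin n, M i i = 1



variable {n : ℕ}

theorem isUT_iff_bt {M : Matrix (Fin n) (Fin n) ℂ} : IsUT M ↔ M.BlockTriangular id :=
  ⟨fun h i j hij => h i j hij, fun h i j hij => h hij⟩

theorem IsUT.mul {a b : Matrix (Fin n) (Fin n) ℂ} (ha : IsUT a) (hb : IsUT b) :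
    IsUT (a * b) :=
  isUT_iff_bt.2 ((isUT_iff_bt.1 ha).mul (isUT_iff_bt.1 hb))

theorem IsUT.diag_mul {a b : Matrix (Fin n) (Fin n) ℂ} (ha : IsUT a) (hb : IsUT b)
    (i : Fin n) : (a * b) i i = a i i * b i i := by
  rw [Matrix.mul_apply]
  apply Finset.sum_eq_single i
  · intro k _ hk
    rcases lt_or_gt_of_ne hk with h | h
    · rw [ha i k h, zero_mul]
    · rw [hb k i h, mul_zero]
  · intro h; exact absurd (Finset.mem_univ i) h

theorem IsUT.det_eq {a : Matrix (Fin n) (Fin n) ℂ} (ha : IsUT a) :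
    a.det = ∏ i, a i i :=
  Matrix.det_of_upperTriangular (isUT_iff_bt.1 ha)

theorem IsUT.isUnit_det {a : Matrix (Fin n) (Fin n) ℂ} (ha : IsUT a)
    (h : ∀ i, a i i ≠ 0) : IsUnit a.det := by
  rw [ha.det_eq]
  exact (Finset.prod_ne_zero_iff.2 fun i _ => h i).isUnit

theorem IsUT.inv {a : Matrix (Fin n) (Fin n) ℂ} (ha : IsUT a)
    (h : ∀ i, a i i ≠ 0) : IsUT a⁻¹ := by
  have : Invertible a := a.invertibleOfIsUnitDet (ha.isUnit_det h)
  exact isUT_iff_bt.2 (Matrix.blockTriangular_inv_of_blockTriangular (isUT_iff_bt.1 ha))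

theorem IsUT.diag_inv {a : Matrix (Fin n) (Fin n) ℂ} (ha : IsUT a)
    (h : ∀ i, a i i ≠ 0) (i : Fin n) : a⁻¹ i i = (a i i)⁻¹ := by
  have h1 : a⁻¹ * a = 1 := Matrix.nonsing_inv_mul a (ha.isUnit_det h)
  have h2 := (ha.inv h).diag_mul ha i
  rw [h1] at h2
  have : (1 : Matrix (Fin n) (Fin n) ℂ) i i = 1 := Matrix.one_apply_eq i
  rw [this] at h2
  exact eq_inv_of_mul_eq_one_left h2.symm

theorem IsUnipUT.isUnit_det {a : Matrix (Fin n) (Fin n) ℂ} (ha : IsUnipUT a) :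
    IsUnit a.det :=
  ha.1.isUnit_det (fun i => by rw [ha.2 i]; exact one_ne_zero)

theorem IsUnipUT.inv {a : Matrix (Fin n) (Fin n) ℂ} (ha : IsUnipUT a) :
    IsUnipUT a⁻¹ := by
  have hd : ∀ i, a i i ≠ 0 := fun i => by rw [ha.2 i]; exact one_ne_zero
  refine ⟨ha.1.inv hd, fun i => ?_⟩
  rw [ha.1.diag_inv hd i, ha.2 i, inv_one]

theorem IsUnipUT.mul {a b : Matrix (Fin n) (Fin n) ℂ} (ha : IsUnipUT a) (hb : IsUnipUT b) :
    IsUnipUT (a * b) :=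
  ⟨ha.1.mul hb.1, fun i => by rw [ha.1.diag_mul hb.1 i, ha.2 i, hb.2 i, one_mul]⟩

theorem IsUnipUT.one : IsUnipUT (1 : Matrix (Fin n) (Fin n) ℂ) :=
  ⟨fun i j hij => Matrix.one_apply_ne (Ne.symm (ne_of_lt hij)), fun i => Matrix.one_apply_eq i⟩


noncomputable def rowW (n : ℕ) (X : Matrix (Fin n) (Fin n) ℂ) (i : Fin n) : ℕ → ℂ
  | m =>
    if hm : m < n then
      if (i : ℕ) = m then 1
      else if m < (i : ℕ) then 0
      else (∑ k : Fin m, rowW n X i k * X ⟨k, k.isLt.trans hm⟩ ⟨m, hm⟩) /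
        (X i i - X ⟨m, hm⟩ ⟨m, hm⟩)
    else 0
  termination_by m => m
  decreasing_by exact k.isLt

variable {n : ℕ} (X : Matrix (Fin n) (Fin n) ℂ)

lemma rowW_self (i : Fin n) : rowW n X i i = 1 := by
  rw [rowW]
  simp [i.isLt]

lemma rowW_lt (i : Fin n) {m : ℕ} (h : m < (i : ℕ)) : rowW n X i m = 0 := by
  rw [rowW]
  have : (i : ℕ) ≠ m := by omega
  simp [h.trans i.isLt, this, h]

lemma rowW_gt (i m : Fin n) (h : (i : ℕ) < (m : ℕ)) :
    rowW n X i m = (∑ k : Fin (m : ℕ), rowW n X i k * X ⟨k, k.isLt.trans m.isLt⟩ m) /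
      (X i i - X m m) := by
  conv_lhs => rw [rowW]
  have h1 : (i : ℕ) ≠ (m : ℕ) := by omega
  have h2 : ¬ ((m : ℕ) < (i : ℕ)) := by omega
  simp only [m.isLt, dif_pos, h1, if_false, h2, Fin.eta]

theorem exists_unipUT_conj_diag (hX : IsUT X)
    (hinj : Function.Injective fun i => X i i) :
    ∃ w : Matrix (Fin n) (Fin n) ℂ, IsUnipUT w ∧
      w * X = Matrix.diagonal (fun i => X i i) * w := by
  set w : Matrix (Fin n) (Fin n) ℂ := Matrix.of fun i j => rowW n X i j with hw
  have hwa : ∀ i j : Fin n, w i j = rowW n X i j := fun i j => rfl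
  refine ⟨w, ⟨fun i j hij => by rw [hwa, rowW_lt X i hij], fun i => by rw [hwa, rowW_self]⟩, ?_⟩
  ext i j
  rw [Matrix.mul_apply, Matrix.diagonal_mul]
  rcases lt_trichotomy i j with hij | hij | hij
  · -- i < j
    set F : ℕ → ℂ := fun m => if hm : m < n then rowW n X i m * X ⟨m, hm⟩ j else 0 with hF
    have e1 : ∑ k : Fin n, w i k * X k j = ∑ m ∈ Finset.range n, F m := by
      rw [← Fin.sum_univ_eq_sum_range F n]
      apply Finset.sum_congr rfl
      intro k _
      simp only [hF, k.isLt, dif_pos, Fin.eta, hwa]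
    have e2 : ∑ m ∈ Finset.range n, F m = ∑ m ∈ Finset.range ((j : ℕ) + 1), F m := by
      rw [Finset.range_eq_Ico]
      rw [← Finset.sum_Ico_consecutive F (Nat.zero_le ((j : ℕ) + 1)) j.isLt]
      have : ∑ m ∈ Finset.Ico ((j : ℕ) + 1) n, F m = 0 := by
        apply Finset.sum_eq_zero
        intro m hm
        rw [Finset.mem_Ico] at hm
        have hmn : m < n := hm.2
        have : X ⟨m, hmn⟩ j = 0 := hX _ _ (by simp [Fin.lt_def]; omega)
        simp [hF, hmn, this]
      rw [this, add_zero]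
      rw [Finset.range_eq_Ico]
    have e3 : F (j : ℕ) = rowW n X i j * X j j := by
      simp [hF, j.isLt]
    have hd : X i i - X j j ≠ 0 := by
      refine sub_ne_zero.2 fun hc => ?_
      exact absurd (hinj hc) (ne_of_lt hij)
    have e4 : ∑ m ∈ Finset.range (j : ℕ), F m = (X i i - X j j) * rowW n X i j := by
      rw [rowW_gt X i j (by exact hij)]
      rw [mul_div_cancel₀ _ hd]
      rw [← Fin.sum_univ_eq_sum_range F (j : ℕ)]
      apply Finset.sum_congr rfl
      intro k _
      simp only [hF, k.isLt.trans j.isLt, dif_pos]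
    rw [e1, e2, Finset.sum_range_succ, e4, e3, hwa]
    ring
  · -- i = j
    subst hij
    rw [Finset.sum_eq_single i]
    · rw [hwa, rowW_self, one_mul, mul_one]
    · intro k _ hk
      rcases lt_or_gt_of_ne hk with h | h
      · rw [hwa, rowW_lt X i (by exact_mod_cast h), zero_mul]
      · rw [hX _ _ h, mul_zero]
    · intro h; exact absurd (Finset.mem_univ i) h
  · -- j < i
    have hz : w i j = 0 := by rw [hwa]; exact rowW_lt X i hij
    rw [hz, mul_zero]
    apply Finset.sum_eq_zero
    intro k _
    rcases lt_or_ge (k : ℕ) (i : ℕ) with h | h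
    · rw [hwa, rowW_lt X i h, zero_mul]
    · have : j < k := lt_of_lt_of_le hij (by exact h)
      rw [hX _ _ this, mul_zero]

theorem exists_unipUT_intertwine {n : ℕ} (X Y : Matrix (Fin n) (Fin n) ℂ)
    (hX : IsUT X) (hY : IsUT Y) (hdiag : ∀ i, X i i = Y i i)
    (hinj : Function.Injective fun i => X i i) :
    ∃ w : Matrix (Fin n) (Fin n) ℂ, IsUnipUT w ∧ w * X = Y * w := by
  obtain ⟨w1, hw1, e1⟩ := exists_unipUT_conj_diag X hX hinj
  have hinj' : Function.Injective fun i => Y i i := by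
    intro i j h
    exact hinj (by simp only [hdiag]; exact h)
  obtain ⟨w2, hw2, e2⟩ := exists_unipUT_conj_diag Y hY hinj'
  have hDeq : Matrix.diagonal (fun i => X i i) = Matrix.diagonal (fun i => Y i i) := by
    exact congrArg Matrix.diagonal (funext hdiag)
  have h2l : w2⁻¹ * w2 = 1 := Matrix.nonsing_inv_mul w2 hw2.isUnit_det
  have h2r : w2 * w2⁻¹ = 1 := Matrix.mul_nonsing_inv w2 hw2.isUnit_det
  have key : w2⁻¹ * Matrix.diagonal (fun i => Y i i) = Y * w2⁻¹ := by
    have := congrArg (fun M => w2⁻¹ * M * w2⁻¹) e2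
    simp only [Matrix.mul_assoc] at this
    rw [h2r] at this
    simp only [← Matrix.mul_assoc, h2l] at this
    simp only [Matrix.mul_one, Matrix.one_mul] at this
    exact this.symm
  refine ⟨w2⁻¹ * w1, hw2.inv.mul hw1, ?_⟩
  calc w2⁻¹ * w1 * X = w2⁻¹ * (w1 * X) := by rw [Matrix.mul_assoc]
    _ = w2⁻¹ * (Matrix.diagonal (fun i => Y i i) * w1) := by rw [e1, hDeq]
    _ = w2⁻¹ * Matrix.diagonal (fun i => Y i i) * w1 := by rw [Matrix.mul_assoc]
    _ = Y * w2⁻¹ * w1 := by rw [key]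
    _ = Y * (w2⁻¹ * w1) := by rw [Matrix.mul_assoc]

noncomputable def chainM {n : ℕ} (r : ℕ) (L : Fin (r + 1) → Matrix (Fin n) (Fin n) ℂ) :
    ℕ → Matrix (Fin n) (Fin n) ℂ
  | 0 => 1
  | k + 1 => if h : k < r then L ⟨k, by omega⟩ * chainM r L k else chainM r L k

noncomputable def chainN {n : ℕ} (r : ℕ) (R : Fin (r + 1) → Matrix (Fin n) (Fin n) ℂ) :
    ℕ → Matrix (Fin n) (Fin n) ℂ
  | 0 => 1
  | k + 1 => if h : k < r then chainN r R k * R ⟨k, by omega⟩ else chainN r R k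

lemma chainM_zero {n r : ℕ} (L : Fin (r + 1) → Matrix (Fin n) (Fin n) ℂ) :
    chainM r L 0 = 1 := rfl

lemma chainN_zero {n r : ℕ} (R : Fin (r + 1) → Matrix (Fin n) (Fin n) ℂ) :
    chainN r R 0 = 1 := rfl

lemma chainM_succ {n r : ℕ} (L : Fin (r + 1) → Matrix (Fin n) (Fin n) ℂ) (k : ℕ) (h : k < r) :
    chainM r L (k + 1) = L ⟨k, by omega⟩ * chainM r L k := by
  rw [chainM, dif_pos h]

lemma chainN_succ {n r : ℕ} (R : Fin (r + 1) → Matrix (Fin n) (Fin n) ℂ) (k : ℕ) (h : k < r) :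
    chainN r R (k + 1) = chainN r R k * R ⟨k, by omega⟩ := by
  rw [chainN, dif_pos h]

lemma isUT_diagonal {n : ℕ} (d : Fin n → ℂ) : IsUT (Matrix.diagonal d) :=
  fun i j h => Matrix.diagonal_apply_ne d (ne_of_gt h)

lemma chainM_facts {n r : ℕ} (L : Fin (r + 1) → Matrix (Fin n) (Fin n) ℂ)
    (hL : ∀ α, IsUT (L α)) :
    ∀ k, k ≤ r → IsUT (chainM r L k) ∧
      ∀ i, (chainM r L k) i i
        = ∏ j ∈ Finset.range k, (if h : j < r + 1 then L ⟨j, h⟩ i i else 1) := by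
  intro k
  induction k with
  | zero =>
    intro _
    exact ⟨IsUnipUT.one.1, fun i => by rw [chainM_zero]; simp [Matrix.one_apply_eq]⟩
  | succ k ih =>
    intro hk
    have hkr : k < r := Nat.lt_of_succ_le hk
    obtain ⟨ihUT, ihdiag⟩ := ih (le_of_lt hkr)
    rw [chainM_succ L k hkr]
    refine ⟨(hL _).mul ihUT, fun i => ?_⟩
    rw [(hL _).diag_mul ihUT i, ihdiag i, Finset.prod_range_succ, mul_comm]
    congr 1
    rw [dif_pos (by omega : k < r + 1)]

lemma chainN_facts {n r : ℕ} (R : Fin (r + 1) → Matrix (Fin n) (Fin n) ℂ)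
    (hR : ∀ α, IsUT (R α)) :
    ∀ k, k ≤ r → IsUT (chainN r R k) ∧
      ∀ i, (chainN r R k) i i
        = ∏ j ∈ Finset.range k, (if h : j < r + 1 then R ⟨j, h⟩ i i else 1) := by
  intro k
  induction k with
  | zero =>
    intro _
    exact ⟨IsUnipUT.one.1, fun i => by rw [chainN_zero]; simp [Matrix.one_apply_eq]⟩
  | succ k ih =>
    intro hk
    have hkr : k < r := Nat.lt_of_succ_le hk
    obtain ⟨ihUT, ihdiag⟩ := ih (le_of_lt hkr)
    rw [chainN_succ R k hkr]
    refine ⟨ihUT.mul (hR _), fun i => ?_⟩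
    rw [ihUT.diag_mul (hR _) i, ihdiag i, Finset.prod_range_succ]
    congr 1
    rw [dif_pos (by omega : k < r + 1)]

theorem chain_exists {n r : ℕ} (hr : 1 ≤ r) (tl hd : Fin (r + 1) → Fin (r + 1))
    (hor : ∀ α : Fin (r + 1),
      ((α : ℕ) < r →
        (((tl α : ℕ) = (α : ℕ) ∧ (hd α : ℕ) = (α : ℕ) + 1) ∨
         ((tl α : ℕ) = (α : ℕ) + 1 ∧ (hd α : ℕ) = (α : ℕ)))) ∧
      ((α : ℕ) = r →
        (((tl α : ℕ) = r ∧ (hd α : ℕ) = 0) ∨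
         ((tl α : ℕ) = 0 ∧ (hd α : ℕ) = r))))
    (A : Fin (r + 1) → Matrix (Fin n) (Fin n) ℂ) (hA : ∀ α, IsUT (A α))
    (hx : ∀ α i, A α i i ≠ 0)
    (hinj : Function.Injective fun i : Fin n =>
      ∏ α : Fin (r + 1), (if (tl α : ℕ) = (α : ℕ) then A α i i else (A α i i)⁻¹)) :
    ∃ u : Fin (r + 1) → Matrix (Fin n) (Fin n) ℂ, (∀ v, IsUnipUT (u v)) ∧
      ∀ α, u (hd α) * A α * (u (tl α))⁻¹ = Matrix.diagonal (fun i => A α i i) := by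
  classical
  set c : Fin (r + 1) → Fin n → ℂ :=
    fun α i => if (tl α : ℕ) = (α : ℕ) then A α i i else (A α i i)⁻¹ with hc_def
  have hc : ∀ α i, c α i ≠ 0 := by
    intro α i
    rw [hc_def]
    dsimp only
    split
    · exact hx α i
    · exact inv_ne_zero (hx α i)
  set L : Fin (r + 1) → Matrix (Fin n) (Fin n) ℂ := fun α => Matrix.diagonal (c α) with hL_def
  set R : Fin (r + 1) → Matrix (Fin n) (Fin n) ℂ :=
    fun α => if (tl α : ℕ) = (α : ℕ) then (A α)⁻¹ else A α with hR_def
  have hLut : ∀ α, IsUT (L α) := fun α => isUT_diagonal (c α)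
  have hLdiag : ∀ α i, L α i i = c α i := fun α i => Matrix.diagonal_apply_eq (c α) i
  have hRut : ∀ α, IsUT (R α) := by
    intro α
    rw [hR_def]
    dsimp only
    split
    · exact (hA α).inv (hx α)
    · exact hA α
  have hRdiag : ∀ α i, R α i i = (c α i)⁻¹ := by
    intro α i
    rw [hR_def, hc_def]
    dsimp only
    split
    · exact (hA α).diag_inv (hx α) i
    · exact (inv_inv (A α i i)).symm
  -- scalar products
  set ll : ℕ → Fin n → ℂ := fun j i => if h : j < r + 1 then c ⟨j, h⟩ i else 1 with hll_def
  have hllne : ∀ j i, ll j i ≠ 0 := by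
    intro j i
    rw [hll_def]
    dsimp only
    split
    · exact hc _ i
    · exact one_ne_zero
  set Pp : ℕ → Fin n → ℂ := fun k i => ∏ j ∈ Finset.range k, ll j i with hPp_def
  have hPpne : ∀ k i, Pp k i ≠ 0 := fun k i =>
    Finset.prod_ne_zero_iff.2 fun j _ => hllne j i
  -- chainM / chainN facts
  have hMfact := chainM_facts L hLut
  have hNfact := chainN_facts R hRut
  have hMut : ∀ k, k ≤ r → IsUT (chainM r L k) := fun k hk => (hMfact k hk).1
  have hNut : ∀ k, k ≤ r → IsUT (chainN r R k) := fun k hk => (hNfact k hk).1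
  have hMdiag : ∀ k, k ≤ r → ∀ i, (chainM r L k) i i = Pp k i := by
    intro k hk i
    rw [(hMfact k hk).2 i, hPp_def]
    apply Finset.prod_congr rfl
    intro j hj
    rw [hll_def]
    dsimp only
    rw [Finset.mem_range] at hj
    rw [dif_pos (by omega : j < r + 1), dif_pos (by omega : j < r + 1), hLdiag]
  have hNdiag : ∀ k, k ≤ r → ∀ i, (chainN r R k) i i = (Pp k i)⁻¹ := by
    intro k hk i
    rw [(hNfact k hk).2 i, hPp_def, ← Finset.prod_inv_distrib]
    apply Finset.prod_congr rfl
    intro j hj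
    rw [Finset.mem_range] at hj
    rw [dif_pos (by omega : j < r + 1), hRdiag, hll_def]
    dsimp only
    rw [dif_pos (by omega : j < r + 1)]
  -- unipotency of candidate u's
  have huu : ∀ w : Matrix (Fin n) (Fin n) ℂ, IsUnipUT w → ∀ v : Fin (r + 1),
      IsUnipUT (chainM r L (v : ℕ) * w * chainN r R (v : ℕ)) := by
    intro w hw v
    have hv : (v : ℕ) ≤ r := Nat.le_of_lt_succ v.isLt
    refine ⟨((hMut _ hv).mul hw.1).mul (hNut _ hv), fun i => ?_⟩
    rw [((hMut _ hv).mul hw.1).diag_mul (hNut _ hv) i, (hMut _ hv).diag_mul hw.1 i,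
      hw.2 i, hMdiag _ hv i, hNdiag _ hv i, mul_one]
    exact mul_inv_cancel₀ (hPpne _ i)
  -- reduction: turn `B * Aa = Dm * C` into the inverse form
  have hred : ∀ B C Dm Aa : Matrix (Fin n) (Fin n) ℂ, IsUnit C.det →
      B * Aa = Dm * C → B * Aa * C⁻¹ = Dm := by
    intro B C Dm Aa hC hE
    rw [hE, Matrix.mul_assoc, Matrix.mul_nonsing_inv _ hC, Matrix.mul_one]
  -- the equations at the small arrows
  have hsmall : ∀ w : Matrix (Fin n) (Fin n) ℂ, IsUnipUT w → ∀ α : Fin (r + 1), (α : ℕ) < r →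
      (chainM r L ((hd α : ℕ)) * w * chainN r R ((hd α : ℕ))) * A α *
        (chainM r L ((tl α : ℕ)) * w * chainN r R ((tl α : ℕ)))⁻¹
        = Matrix.diagonal (fun i => A α i i) := by
    intro w hw α hα
    rcases (hor α).1 hα with ⟨htl, hhd⟩ | ⟨htl, hhd⟩
    · -- forward arrow : tl α = α, hd α = α + 1
      have hRA : R α * A α = 1 := by
        rw [hR_def]
        dsimp only
        rw [if_pos htl]
        exact Matrix.nonsing_inv_mul (A α) ((hA α).isUnit_det (hx α))
      have hDL : Matrix.diagonal (fun i => A α i i) = L α := by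
        rw [hL_def]
        dsimp only
        apply congrArg Matrix.diagonal
        funext i
        rw [hc_def]
        dsimp only
        rw [if_pos htl]
      apply hred _ _ _ _ ((huu w hw (tl α)).isUnit_det)
      rw [hhd, htl, chainM_succ L (α : ℕ) hα, chainN_succ R (α : ℕ) hα, Fin.eta]
      simp only [Matrix.mul_assoc]
      rw [hRA, Matrix.mul_one, hDL]
    · -- backward arrow : tl α = α + 1, hd α = α
      have hDL1 : Matrix.diagonal (fun i => A α i i) * L α = 1 := by
        rw [hL_def]
        dsimp only
        rw [Matrix.diagonal_mul_diagonal, ← Matrix.diagonal_one]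
        apply congrArg Matrix.diagonal
        funext i
        show A α i i * c α i = 1
        rw [hc_def]
        dsimp only
        rw [if_neg (by omega)]
        exact mul_inv_cancel₀ (hx α i)
      have hRA : R α = A α := by
        rw [hR_def]
        dsimp only
        rw [if_neg (by omega)]
      apply hred _ _ _ _ ((huu w hw (tl α)).isUnit_det)
      rw [hhd, htl, chainM_succ L (α : ℕ) hα, chainN_succ R (α : ℕ) hα, Fin.eta, hRA]
      simp only [Matrix.mul_assoc]
      rw [← Matrix.mul_assoc (Matrix.diagonal fun i => A α i i) (L α), hDL1, Matrix.one_mul]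
  -- data for the big arrow
  set lastA : Fin (r + 1) := ⟨r, by omega⟩ with hlastA_def
  set Mr := chainM r L r with hMr_def
  set Nr := chainN r R r with hNr_def
  have hMrut : IsUT Mr := hMut r le_rfl
  have hNrut : IsUT Nr := hNut r le_rfl
  have hMrdiag : ∀ i, Mr i i = Pp r i := hMdiag r le_rfl
  have hNrdiag : ∀ i, Nr i i = (Pp r i)⁻¹ := hNdiag r le_rfl
  have hMrdet : IsUnit Mr.det := hMrut.isUnit_det fun i => by rw [hMrdiag]; exact hPpne r i
  have hNrdet : IsUnit Nr.det := hNrut.isUnit_det fun i => by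
    rw [hNrdiag]; exact inv_ne_zero (hPpne r i)
  have hNrinv_ut : IsUT Nr⁻¹ := hNrut.inv fun i => by
    rw [hNrdiag]; exact inv_ne_zero (hPpne r i)
  have hNrinv_diag : ∀ i, Nr⁻¹ i i = Pp r i := fun i => by
    rw [hNrut.diag_inv (fun i => by rw [hNrdiag]; exact inv_ne_zero (hPpne r i)) i,
      hNrdiag, inv_inv]
  have hMrinv_ut : IsUT Mr⁻¹ := hMrut.inv fun i => by rw [hMrdiag]; exact hPpne r i
  have hMrinv_diag : ∀ i, Mr⁻¹ i i = (Pp r i)⁻¹ := fun i => by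
    rw [hMrut.diag_inv (fun i => by rw [hMrdiag]; exact hPpne r i) i, hMrdiag]
  have hddP : ∀ i, (∏ α : Fin (r + 1), c α i) = Pp r i * c lastA i := by
    intro i
    rw [show (∏ α : Fin (r + 1), c α i) = ∏ j ∈ Finset.range (r + 1), ll j i from ?_,
      Finset.prod_range_succ]
    · congr 1
      rw [hll_def]
      dsimp only
      rw [dif_pos (by omega : r < r + 1)]
    · rw [← Fin.prod_univ_eq_prod_range (fun j => ll j i) (r + 1)]
      apply Finset.prod_congr rfl
      intro α _
      rw [hll_def]
      dsimp only
      rw [dif_pos α.isLt, Fin.eta]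
  have hlast_val : (lastA : ℕ) = r := rfl
  rcases (hor lastA).2 hlast_val with ⟨htl, hhd⟩ | ⟨htl, hhd⟩
  · -- last arrow forward : tl lastA = r, hd lastA = 0
    have hclast : ∀ i, c lastA i = A lastA i i := by
      intro i
      rw [hc_def]
      dsimp only
      rw [if_pos (by rw [htl])]
    set X := A lastA * Nr⁻¹ with hX_def
    set Y := Matrix.diagonal (fun i => A lastA i i) * Mr with hY_def
    have hXut : IsUT X := (hA lastA).mul hNrinv_ut
    have hYut : IsUT Y := (isUT_diagonal _).mul hMrut
    have hXdiag : ∀ i, X i i = A lastA i i * Pp r i := fun i => by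
      rw [hX_def]
      rw [(hA lastA).diag_mul hNrinv_ut i, hNrinv_diag i]
    have hYdiag : ∀ i, Y i i = A lastA i i * Pp r i := fun i => by
      rw [hY_def]
      rw [(isUT_diagonal _).diag_mul hMrut i, Matrix.diagonal_apply_eq, hMrdiag i]
    have hinjX : Function.Injective fun i => X i i := by
      intro i j h
      simp only [hXdiag] at h
      apply hinj
      show (∏ α, c α i) = ∏ α, c α j
      rw [hddP i, hddP j, hclast i, hclast j, mul_comm (Pp r i), mul_comm (Pp r j)]
      exact h
    obtain ⟨w, hwu, hwX⟩ := exists_unipUT_intertwine X Y hXut hYut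
      (fun i => by rw [hXdiag, hYdiag]) hinjX
    refine ⟨fun v => chainM r L (v : ℕ) * w * chainN r R (v : ℕ), huu w hwu, ?_⟩
    intro α
    rcases Nat.lt_or_ge (α : ℕ) r with hlt | hge
    · exact hsmall w hwu α hlt
    · have hαl : α = lastA := Fin.ext (by have := α.isLt; omega)
      subst hαl
      apply hred _ _ _ _ ((huu w hwu (tl lastA)).isUnit_det)
      dsimp only
      rw [hhd, htl, chainM_zero, chainN_zero, Matrix.one_mul, Matrix.mul_one]
      have hE := congrArg (fun Z => Z * Nr) hwX
      rw [hX_def, hY_def] at hE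
      simp only [Matrix.mul_assoc] at hE
      rw [Matrix.nonsing_inv_mul Nr hNrdet, Matrix.mul_one] at hE
      simp only [Matrix.mul_assoc]
      exact hE
  · -- last arrow backward : tl lastA = 0, hd lastA = r
    have hclast : ∀ i, c lastA i = (A lastA i i)⁻¹ := by
      intro i
      rw [hc_def]
      dsimp only
      rw [if_neg (by rw [htl]; omega)]
    set X := Nr * A lastA with hX_def
    set Y := Mr⁻¹ * Matrix.diagonal (fun i => A lastA i i) with hY_def
    have hXut : IsUT X := hNrut.mul (hA lastA)
    have hYut : IsUT Y := hMrinv_ut.mul (isUT_diagonal _)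
    have hXdiag : ∀ i, X i i = (Pp r i)⁻¹ * A lastA i i := fun i => by
      rw [hX_def]
      rw [hNrut.diag_mul (hA lastA) i, hNrdiag i]
    have hYdiag : ∀ i, Y i i = (Pp r i)⁻¹ * A lastA i i := fun i => by
      rw [hY_def]
      rw [hMrinv_ut.diag_mul (isUT_diagonal _) i, Matrix.diagonal_apply_eq, hMrinv_diag i]
    have hXdd : ∀ i, X i i = (Pp r i * c lastA i)⁻¹ := by
      intro i
      rw [hXdiag i, hclast i, mul_inv, inv_inv]
    have hinjX : Function.Injective fun i => X i i := by
      intro i j h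
      dsimp only at h
      rw [hXdd i, hXdd j] at h
      apply hinj
      show (∏ α, c α i) = ∏ α, c α j
      rw [hddP i, hddP j]
      exact inv_injective h
    obtain ⟨w, hwu, hwX⟩ := exists_unipUT_intertwine X Y hXut hYut
      (fun i => by rw [hXdiag, hYdiag]) hinjX
    refine ⟨fun v => chainM r L (v : ℕ) * w * chainN r R (v : ℕ), huu w hwu, ?_⟩
    intro α
    rcases Nat.lt_or_ge (α : ℕ) r with hlt | hge
    · exact hsmall w hwu α hlt
    · have hαl : α = lastA := Fin.ext (by have := α.isLt; omega)
      subst hαl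
      apply hred _ _ _ _ ((huu w hwu (tl lastA)).isUnit_det)
      dsimp only
      rw [hhd, htl, chainM_zero, chainN_zero, Matrix.one_mul, Matrix.mul_one]
      rw [hX_def, hY_def] at hwX
      simp only [Matrix.mul_assoc] at hwX
      simp only [Matrix.mul_assoc]
      rw [hwX, ← Matrix.mul_assoc Mr Mr⁻¹, Matrix.mul_nonsing_inv Mr hMrdet, Matrix.one_mul]

lemma eval_bind {σ τ : Type*} (φ : σ → MvPolynomial τ ℂ) (y : τ → ℂ) (P : MvPolynomial σ ℂ) :
    MvPolynomial.eval y (MvPolynomial.bind₁ φ P)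
      = MvPolynomial.eval (fun i => MvPolynomial.eval y (φ i)) P := by
  apply MvPolynomial.induction_on P
  · intro a; simp
  · intro p q hp hq; simp [hp, hq]
  · intro p i hp; simp [hp]

/-- Semi-invariants of filtered affine `Ã_r`-Dynkin quivers (no framing):
for any orientation of the affine `Ã_r`-Dynkin graph (vertices `Fin (r+1)` arranged in
a cycle, arrows `Fin (r+1)`; for `α < r` the `α`-th arrow joins `α` and `α+1`, and the
last arrow (index `r`) joins `r` and `0`), a polynomial function on `𝔟ₙ^{⊕(r+1)}` is
invariant under the change-of-basis action of `Uₙ^{r+1}` iff it is a polynomial in the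
diagonal entries; i.e. `ℂ[𝔟^{⊕(r+1)}]^{𝕌_β} ≅ ℂ[𝔱^{⊕(r+1)}]`. -/
theorem semiInvariants_filtered_affine_Ar_Dynkin_quiver
    (n r : ℕ) (hn : 1 ≤ n) (hr : 1 ≤ r)
    (tl hd : Fin (r + 1) → Fin (r + 1))
    (hor : ∀ α : Fin (r + 1),
      ((α : ℕ) < r →
        (((tl α : ℕ) = (α : ℕ) ∧ (hd α : ℕ) = (α : ℕ) + 1) ∨
         ((tl α : ℕ) = (α : ℕ) + 1 ∧ (hd α : ℕ) = (α : ℕ)))) ∧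
      ((α : ℕ) = r →
        (((tl α : ℕ) = r ∧ (hd α : ℕ) = 0) ∨
         ((tl α : ℕ) = 0 ∧ (hd α : ℕ) = r))))
    (f : (Fin (r + 1) → Matrix (Fin n) (Fin n) ℂ) → ℂ)
    (hf : ∃ P : MvPolynomial (Fin (r + 1) × Fin n × Fin n) ℂ,
      ∀ A, f A = MvPolynomial.eval (fun q => A q.1 q.2.1 q.2.2) P) :
    (∀ u : Fin (r + 1) → Matrix (Fin n) (Fin n) ℂ, (∀ v, IsUnipUT (u v)) →
        ∀ A : Fin (r + 1) → Matrix (Fin n) (Fin n) ℂ, (∀ α, IsUT (A α)) →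
          f (fun α => u (hd α) * A α * (u (tl α))⁻¹) = f A) ↔
      ∃ g : MvPolynomial (Fin (r + 1) × Fin n) ℂ,
        ∀ A : Fin (r + 1) → Matrix (Fin n) (Fin n) ℂ, (∀ α, IsUT (A α)) →
          f A = MvPolynomial.eval (fun q => A q.1 q.2 q.2) g := by
  classical
  obtain ⟨P, hP⟩ := hf
  constructor
  · -- invariance → polynomial in the diagonal entries
    intro hinv
    set φd : Fin (r + 1) × Fin n × Fin n → MvPolynomial (Fin (r + 1) × Fin n) ℂ :=
      fun q => if q.2.1 = q.2.2 then MvPolynomial.X (q.1, q.2.1) else 0 with hφd_def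
    set G : MvPolynomial (Fin (r + 1) × Fin n) ℂ := MvPolynomial.bind₁ φd P with hG_def
    refine ⟨G, ?_⟩
    set φu : Fin (r + 1) × Fin n × Fin n → MvPolynomial (Fin (r + 1) × Fin n × Fin n) ℂ :=
      fun q => if q.2.1 ≤ q.2.2 then MvPolynomial.X q else 0 with hφu_def
    set P' : MvPolynomial (Fin (r + 1) × Fin n × Fin n) ℂ := MvPolynomial.bind₁ φu P
      with hP'_def
    set e : Fin (r + 1) × Fin n → Fin (r + 1) × Fin n × Fin n := fun p => (p.1, p.2, p.2)
      with he_def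
    set G' : MvPolynomial (Fin (r + 1) × Fin n × Fin n) ℂ := MvPolynomial.rename e G
      with hG'_def
    have hP'eval : ∀ x : Fin (r + 1) × Fin n × Fin n → ℂ,
        MvPolynomial.eval x P'
          = f (fun α => Matrix.of fun i j => if i ≤ j then x (α, i, j) else 0) := by
      intro x
      rw [hP'_def, eval_bind, hP]
      refine congrArg (fun v : (Fin (r + 1) × Fin n × Fin n) → ℂ => MvPolynomial.eval v P)
        (funext fun q => ?_)
      rw [hφu_def]
      dsimp only
      split
      · rw [MvPolynomial.eval_X]
        exact (if_pos (by assumption)).symm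
      · rw [map_zero]
        exact (if_neg (by assumption)).symm
    have hG'eval : ∀ x : Fin (r + 1) × Fin n × Fin n → ℂ,
        MvPolynomial.eval x G'
          = f (fun α => Matrix.diagonal fun i => x (α, i, i)) := by
      intro x
      rw [hG'_def, MvPolynomial.eval_rename, hG_def, eval_bind, hP]
      refine congrArg (fun v : (Fin (r + 1) × Fin n × Fin n) → ℂ => MvPolynomial.eval v P)
        (funext fun q => ?_)
      rw [hφd_def]
      dsimp only
      split
      · rename_i hq
        rw [MvPolynomial.eval_X]
        rw [he_def, ← hq, Matrix.diagonal_apply_eq]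
        rfl
      · rename_i hq
        rw [map_zero]
        exact (Matrix.diagonal_apply_ne _ hq).symm
    -- the genericity polynomial
    set F : Finset (Fin (r + 1)) :=
      Finset.univ.filter (fun α => (tl α : ℕ) = (α : ℕ)) with hF_def
    set Fc : Finset (Fin (r + 1)) :=
      Finset.univ.filter (fun α => ¬ (tl α : ℕ) = (α : ℕ)) with hFc_def
    set m1 : Fin n × Fin n → MvPolynomial (Fin (r + 1) × Fin n × Fin n) ℂ :=
      fun p => (∏ α ∈ F, MvPolynomial.X (α, p.1, p.1)) *
        ∏ α ∈ Fc, MvPolynomial.X (α, p.2, p.2) with hm1_def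
    set m2 : Fin n × Fin n → MvPolynomial (Fin (r + 1) × Fin n × Fin n) ℂ :=
      fun p => (∏ α ∈ F, MvPolynomial.X (α, p.2, p.2)) *
        ∏ α ∈ Fc, MvPolynomial.X (α, p.1, p.1) with hm2_def
    set H1 : MvPolynomial (Fin (r + 1) × Fin n × Fin n) ℂ :=
      ∏ p : Fin (r + 1) × Fin n, MvPolynomial.X (p.1, p.2, p.2) with hH1_def
    set H2 : MvPolynomial (Fin (r + 1) × Fin n × Fin n) ℂ :=
      ∏ p ∈ Finset.univ.filter (fun p : Fin n × Fin n => p.1 < p.2), (m1 p - m2 p) with hH2_def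
    have hH1ne : H1 ≠ 0 :=
      Finset.prod_ne_zero_iff.2 fun p _ => MvPolynomial.X_ne_zero _
    have hH2ne : H2 ≠ 0 := by
      apply Finset.prod_ne_zero_iff.2
      intro p hp
      have hpne : p.1 ≠ p.2 := ne_of_lt (Finset.mem_filter.1 hp).2
      set z : Fin (r + 1) × Fin n × Fin n → ℂ :=
        fun q => if q.1 = Fin.last r ∧ q.2.1 = p.1 then 2 else 1 with hz_def
      intro h0
      have hev : MvPolynomial.eval z (m1 p) = MvPolynomial.eval z (m2 p) := by
        rw [sub_eq_zero] at h0
        rw [h0]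
      have hz1 : ∀ α : Fin (r + 1), z (α, p.1, p.1) = if α = Fin.last r then 2 else 1 := by
        intro α
        rw [hz_def]
        by_cases hα : α = Fin.last r <;> simp [hα]
      have hz2 : ∀ α : Fin (r + 1), z (α, p.2, p.2) = 1 := by
        intro α
        rw [hz_def]
        simp [hpne.symm]
      have he1 : MvPolynomial.eval z (m1 p)
          = if Fin.last r ∈ F then (2 : ℂ) else 1 := by
        rw [hm1_def]
        dsimp only
        rw [map_mul, map_prod, map_prod]
        simp only [MvPolynomial.eval_X, hz1, hz2]
        rw [Finset.prod_const_one, mul_one, Finset.prod_ite_eq' F (Fin.last r) (fun _ => (2:ℂ))]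
      have he2 : MvPolynomial.eval z (m2 p)
          = if Fin.last r ∈ Fc then (2 : ℂ) else 1 := by
        rw [hm2_def]
        dsimp only
        rw [map_mul, map_prod, map_prod]
        simp only [MvPolynomial.eval_X, hz1, hz2]
        rw [Finset.prod_const_one, one_mul, Finset.prod_ite_eq' Fc (Fin.last r) (fun _ => (2:ℂ))]
      rw [he1, he2] at hev
      by_cases hfwd : (tl (Fin.last r) : ℕ) = ((Fin.last r) : ℕ)
      · have h1 : Fin.last r ∈ F := Finset.mem_filter.2 ⟨Finset.mem_univ _, hfwd⟩
        have h2 : Fin.last r ∉ Fc := fun hc => (Finset.mem_filter.1 hc).2 hfwd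
        rw [if_pos h1, if_neg h2] at hev
        norm_num at hev
      · have h1 : Fin.last r ∉ F := fun hc => hfwd (Finset.mem_filter.1 hc).2
        have h2 : Fin.last r ∈ Fc := Finset.mem_filter.2 ⟨Finset.mem_univ _, hfwd⟩
        rw [if_neg h1, if_pos h2] at hev
        norm_num at hev
    -- the key vanishing statement
    have hzero : ∀ x : Fin (r + 1) × Fin n × Fin n → ℂ,
        MvPolynomial.eval x ((P' - G') * (H1 * H2)) = 0 := by
      intro x
      rw [map_mul, map_sub]
      rcases eq_or_ne (MvPolynomial.eval x (H1 * H2)) 0 with h | h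
      · rw [h, mul_zero]
      · suffices hs : MvPolynomial.eval x P' = MvPolynomial.eval x G' by
          rw [hs, sub_self, zero_mul]
        rw [map_mul] at h
        obtain ⟨h1, h2⟩ := mul_ne_zero_iff.1 h
        have hxne : ∀ α i, x (α, i, i) ≠ 0 := by
          intro α i
          rw [hH1_def, map_prod] at h1
          have := Finset.prod_ne_zero_iff.1 h1 (α, i) (Finset.mem_univ _)
          rwa [MvPolynomial.eval_X] at this
        set Ax : Fin (r + 1) → Matrix (Fin n) (Fin n) ℂ :=
          fun α => Matrix.of fun i j => if i ≤ j then x (α, i, j) else 0 with hAx_def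
        have hAxut : ∀ α, IsUT (Ax α) := fun α i j hij => if_neg (not_le.2 hij)
        have hAxd : ∀ α i, Ax α i i = x (α, i, i) := fun α i => if_pos le_rfl
        set pv : Fin n → ℂ := fun k => ∏ α ∈ F, x (α, k, k) with hpv_def
        set qv : Fin n → ℂ := fun k => ∏ α ∈ Fc, x (α, k, k) with hqv_def
        have hpvne : ∀ k, pv k ≠ 0 := fun k =>
          Finset.prod_ne_zero_iff.2 fun α _ => hxne α k
        have hqvne : ∀ k, qv k ≠ 0 := fun k =>
          Finset.prod_ne_zero_iff.2 fun α _ => hxne α k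
        have hddpq : ∀ k : Fin n,
            (∏ α : Fin (r + 1), if (tl α : ℕ) = (α : ℕ) then x (α, k, k) else (x (α, k, k))⁻¹)
              = pv k * (qv k)⁻¹ := by
          intro k
          rw [← Finset.prod_filter_mul_prod_filter_not Finset.univ
            (fun α => (tl α : ℕ) = (α : ℕ))]
          congr 1
          · apply Finset.prod_congr rfl
            intro α hα
            rw [if_pos (Finset.mem_filter.1 hα).2]
          · rw [hqv_def, ← Finset.prod_inv_distrib]
            apply Finset.prod_congr rfl
            intro α hα
            rw [if_neg (Finset.mem_filter.1 hα).2]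
        have hfact : ∀ p : Fin n × Fin n, p.1 < p.2 →
            MvPolynomial.eval x (m1 p) ≠ MvPolynomial.eval x (m2 p) := by
          intro p hp hc
          rw [hH2_def, map_prod] at h2
          have := Finset.prod_ne_zero_iff.1 h2 p
            (Finset.mem_filter.2 ⟨Finset.mem_univ _, hp⟩)
          apply this
          rw [map_sub, hc, sub_self]
        have hmeval : ∀ i j : Fin n,
            MvPolynomial.eval x (m1 (i, j)) = pv i * qv j ∧
            MvPolynomial.eval x (m2 (i, j)) = pv j * qv i := by
          intro i j
          constructor
          · rw [hm1_def]
            dsimp only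
            rw [map_mul, map_prod, map_prod]
            simp only [MvPolynomial.eval_X]
            rfl
          · rw [hm2_def]
            dsimp only
            rw [map_mul, map_prod, map_prod]
            simp only [MvPolynomial.eval_X]
            rfl
        have hcross : ∀ i j : Fin n, i ≠ j →
            pv i * (qv i)⁻¹ = pv j * (qv j)⁻¹ → False := by
          intro i j hne hpq
          have hc : pv i * qv j = pv j * qv i := by
            rw [← div_eq_mul_inv, ← div_eq_mul_inv] at hpq
            exact (div_eq_div_iff (hqvne i) (hqvne j)).1 hpq
          rcases lt_or_gt_of_ne hne with hlt | hlt
          · exact hfact (i, j) hlt (by rw [(hmeval i j).1, (hmeval i j).2, hc])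
          · exact hfact (j, i) hlt (by rw [(hmeval j i).1, (hmeval j i).2, hc.symm])
        have hxinj : Function.Injective fun i : Fin n =>
            ∏ α : Fin (r + 1),
              (if (tl α : ℕ) = (α : ℕ) then Ax α i i else (Ax α i i)⁻¹) := by
          intro i j hij
          by_contra hne
          dsimp only at hij
          simp only [hAxd] at hij
          rw [hddpq i, hddpq j] at hij
          exact hcross i j hne hij
        obtain ⟨uu, huu1, huu2⟩ := chain_exists hr tl hd hor Ax hAxut
          (fun α i => by rw [hAxd]; exact hxne α i) hxinj
        have hiv := hinv uu huu1 Ax hAxut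
        rw [hP'eval x, hG'eval x, ← hiv]
        congr 1
        funext α
        rw [huu2 α]
        exact congrArg Matrix.diagonal (funext fun i => hAxd α i)
    have hPG : P' = G' := by
      have h0 : (P' - G') * (H1 * H2) = 0 :=
        MvPolynomial.funext fun x => by rw [hzero x, map_zero]
      rcases mul_eq_zero.1 h0 with h | h
      · exact sub_eq_zero.1 h
      · exact absurd h (mul_ne_zero hH1ne hH2ne)
    intro A hA
    set x : Fin (r + 1) × Fin n × Fin n → ℂ := fun q => A q.1 q.2.1 q.2.2 with hx_def
    have e1 : MvPolynomial.eval x P' = f A := by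
      rw [hP'eval x]
      congr 1
      funext α
      ext i j
      show (if i ≤ j then A α i j else 0) = A α i j
      split
      · rfl
      · exact (hA α i j (not_le.1 (by assumption))).symm
    have e2 : MvPolynomial.eval x G' = MvPolynomial.eval (fun q => A q.1 q.2 q.2) G := by
      rw [hG'_def, MvPolynomial.eval_rename]
      rfl
    rw [← e1, hPG, e2]
  · -- polynomial in the diagonal → invariance
    rintro ⟨g, hg⟩ u hu A hA
    have hB : ∀ α, IsUT (u (hd α) * A α * (u (tl α))⁻¹) :=
      fun α => ((hu (hd α)).1.mul (hA α)).mul (hu (tl α)).inv.1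
    have hBd : ∀ α i, (u (hd α) * A α * (u (tl α))⁻¹) i i = A α i i := by
      intro α i
      rw [((hu (hd α)).1.mul (hA α)).diag_mul (hu (tl α)).inv.1 i,
        (hu (hd α)).1.diag_mul (hA α) i, (hu (hd α)).2 i, one_mul,
        (hu (tl α)).inv.2 i, mul_one]
    rw [hg _ hB, hg A hA]
    exact congrArg (fun v : (Fin (r + 1) × Fin n) → ℂ => MvPolynomial.eval v g)
      (funext fun q => hBd q.1 q.2)
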